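/- Let p be an odd prime, a a generator of (ℤ/p²ℤ)^×, n = φ(p²) = p(p-1), and γ the 2g×2g block permutation-type matrix (g = (p²-1)/2) defined by γ[i,j] = I if j = ⟨ai⟩_{p²}, γ[i,j] = J if j = p²-⟨ai⟩_{p²}, and 0 otherwise. Then γⁿ is a diagonal matrix whose 2×2 diagonal blocks are each ±I. -/

import Mathlib

/-- The 2g×2g block matrix γ (g = (p²-1)/2): its (i,j) 2×2 block is I if
j = ⟨a·i⟩_{p²}, J = [[0,1],[-1,0]] if j = p² - ⟨a·i⟩_{p²}, and 0 otherwise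
(1-based indices i, j ∈ {1,…,g}). -/
def gammaMatrix (p a : ℕ) :
    Matrix ((Fin ((p ^ 2 - 1) / 2)) × Fin 2) ((Fin ((p ^ 2 - 1) / 2)) × Fin 2) ℝ :=
  Matrix.of fun q r =>
    if ((r.1 : ℕ) + 1) = (a * ((q.1 : ℕ) + 1)) % p ^ 2 then
      (1 : Matrix (Fin 2) (Fin 2) ℝ) q.2 r.2
    else if ((r.1 : ℕ) + 1) = p ^ 2 - (a * ((q.1 : ℕ) + 1)) % p ^ 2 then
      (!![0, 1; -1, 0] : Matrix (Fin 2) (Fin 2) ℝ) q.2 r.2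
    else 0

namespace Stmt12Aux

/-- The matrix J. -/
def J : Matrix (Fin 2) (Fin 2) ℝ := !![0, 1; -1, 0]

lemma J_mul_J : J * J = -1 := by
  ext i j; fin_cases i <;> fin_cases j <;>
    simp [J, Matrix.mul_apply, Fin.sum_univ_two]

lemma J_pow_even (t : ℕ) : J ^ (2 * t) = ((-1 : ℝ) ^ t) • (1 : Matrix (Fin 2) (Fin 2) ℝ) := by
  induction t with
  | zero => simp
  | succ t ih =>
    have h2 : 2 * (t + 1) = 2 * t + 2 := by ring
    rw [h2, pow_add, ih, pow_two, J_mul_J, pow_succ, Matrix.smul_mul, Matrix.one_mul,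
      mul_smul, neg_smul, one_smul, smul_neg]

/-- `u p a i m` is ⟨aᵐ i⟩ mod p². -/
def u (p a i m : ℕ) : ℕ := (a ^ m * i) % p ^ 2

/-- fold into the range 1..g -/
def rep (p x : ℕ) : ℕ := if x ≤ (p ^ 2 - 1) / 2 then x else p ^ 2 - x

/-- number of J-factors accumulated after m steps -/
def kcnt (p a i : ℕ) : ℕ → ℕ
  | 0 => 0
  | m + 1 => kcnt p a i m +
      (if (u p a i (m + 1) ≤ (p ^ 2 - 1) / 2 ↔ u p a i m ≤ (p ^ 2 - 1) / 2) then 0 else 1)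

lemma mod_mul_sub {N a x x' : ℕ} (hN : 0 < N) (hx : x ≤ N) (hx' : 0 < x') (hx'N : x' < N)
    (h : a * x % N = x') : a * (N - x) % N = N - x' := by
  have h1 : (a * (N - x) + a * x) % N = 0 := by
    rw [← Nat.mul_add, Nat.sub_add_cancel hx]
    simp [Nat.mul_mod_right]
  have h2 : (a * (N - x) % N + x') % N = 0 := by
    rw [← h, ← Nat.add_mod]; exact h1
  have ht : a * (N - x) % N < N := Nat.mod_lt _ hN
  obtain ⟨c, hc⟩ := Nat.dvd_of_mod_eq_zero h2
  have hc2 : c < 2 := by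
    by_contra hcon
    push_neg at hcon
    have : 2 * N ≤ N * c := by
      calc 2 * N = N * 2 := by ring
      _ ≤ N * c := Nat.mul_le_mul_left N hcon
    omega
  interval_cases c <;> omega

lemma hg {p : ℕ} (hp : p.Prime) (hodd : Odd p) :
    2 * ((p ^ 2 - 1) / 2) + 1 = p ^ 2 ∧ 4 ≤ (p ^ 2 - 1) / 2 := by
  have h2 : 2 ≤ p := hp.two_le
  have hm : p % 2 = 1 := Nat.odd_iff.mp hodd
  have h3 : 3 ≤ p := by omega
  have h9 : 9 ≤ p ^ 2 := by nlinarith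
  have hodd2 : p ^ 2 % 2 = 1 := by rw [Nat.pow_mod, hm]
  omega

lemma u_pos {p a : ℕ} (ha : Nat.Coprime a (p ^ 2)) {i : ℕ} (hi : 0 < i) (hiN : i < p ^ 2)
    (m : ℕ) : 0 < u p a i m ∧ u p a i m < p ^ 2 := by
  have hN : 0 < p ^ 2 := by omega
  constructor
  · rcases Nat.eq_zero_or_pos (u p a i m) with h | h
    · exfalso
      have hdvd : p ^ 2 ∣ a ^ m * i := Nat.dvd_of_mod_eq_zero h
      have hcop : Nat.Coprime (p ^ 2) (a ^ m) := (Nat.Coprime.pow_left m ha).symm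
      have hdvd2 : p ^ 2 ∣ i := hcop.dvd_of_dvd_mul_right (by rwa [mul_comm] at hdvd)
      have := Nat.le_of_dvd hi hdvd2
      omega
    · exact h
  · exact Nat.mod_lt _ hN

lemma u_succ (p a i m : ℕ) : u p a i (m + 1) = (a * u p a i m) % p ^ 2 := by
  have h : a ^ (m + 1) * i = a * (a ^ m * i) := by ring
  rw [u, u, Nat.mul_mod_mod, h]

lemma rep_bounds {p : ℕ} (hp : p.Prime) (hodd : Odd p) {x : ℕ} (hx : 0 < x)
    (hxN : x < p ^ 2) : 1 ≤ rep p x ∧ rep p x ≤ (p ^ 2 - 1) / 2 := by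
  have := hg hp hodd
  rw [rep]; split <;> omega

lemma pow_eq {p a : ℕ} (hp : p.Prime) (hodd : Odd p) (ha : Nat.Coprime a (p ^ 2)) (m : ℕ) :
    (gammaMatrix p a) ^ m = Matrix.of fun q r =>
      if ((r.1 : ℕ) + 1) = rep p (u p a ((q.1 : ℕ) + 1) m) then
        (J ^ kcnt p a ((q.1 : ℕ) + 1) m) q.2 r.2
      else 0 := by
  have hgg := hg hp hodd
  set g := (p ^ 2 - 1) / 2 with hgdef
  induction m with
  | zero =>
    ext q r
    have hq : (q.1 : ℕ) < g := q.1.isLt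
    have hu0 : u p a ((q.1 : ℕ) + 1) 0 = (q.1 : ℕ) + 1 := by
      rw [u, pow_zero, one_mul, Nat.mod_eq_of_lt (by omega)]
    have hrep : rep p ((q.1 : ℕ) + 1) = (q.1 : ℕ) + 1 := by
      rw [rep]; split <;> omega
    rw [pow_zero]
    simp only [Matrix.of_apply, hu0, hrep, kcnt, pow_zero, Matrix.one_apply, Prod.ext_iff]
    by_cases h1 : ((r.1 : ℕ) + 1) = (q.1 : ℕ) + 1
    · have hqr : q.1 = r.1 := by
        apply Fin.ext; omega
      simp [h1, hqr, Matrix.one_apply, eq_comm]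
    · have hqr : ¬ (q.1 = r.1) := by
        intro h; apply h1; rw [h]
      simp [h1, hqr]
      exact fun h => absurd (Fin.ext h).symm hqr
  | succ m ih =>
    conv_lhs => rw [pow_succ, ih]
    ext q r
    set i : ℕ := (q.1 : ℕ) + 1 with hidef
    have hq : (q.1 : ℕ) < g := q.1.isLt
    have hiN : i < p ^ 2 := by omega
    have hum := u_pos (p := p) ha (i := i) (by omega) hiN m
    have hum' := u_pos (p := p) ha (i := i) (by omega) hiN (m + 1)
    have hrepm := rep_bounds hp hodd (x := u p a i m) hum.1 hum.2
    have hrepm' := rep_bounds hp hodd (x := u p a i (m + 1)) hum'.1 hum'.2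
    have husucc : u p a i (m + 1) = (a * u p a i m) % p ^ 2 := u_succ p a i m
    have hj0lt : rep p (u p a i m) - 1 < g := by omega
    set j0 : Fin g := ⟨rep p (u p a i m) - 1, hj0lt⟩ with hj0def
    have hj0 : ((j0 : Fin g) : ℕ) + 1 = rep p (u p a i m) := by
      simp only [hj0def]; omega
    have hval : rep p (u p a i m) - 1 + 1 = rep p (u p a i m) := by omega
    rw [Matrix.mul_apply, Fintype.sum_prod_type]
    rw [Finset.sum_eq_single j0]
    rotate_left
    · intro b _ hb
      apply Finset.sum_eq_zero
      intro e _
      have hcond : ¬ (((b : Fin g) : ℕ) + 1 = rep p (u p a i m)) := by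
        intro h
        apply hb
        apply Fin.ext
        omega
      simp [Matrix.of_apply, hcond, ← hidef]
    · intro h
      exact absurd (Finset.mem_univ j0) h
    · -- main computation
      simp only [Matrix.of_apply, hj0, if_pos, ← hidef]
      have hr : ((r.1 : ℕ)) < g := r.1.isLt
      by_cases hcase : u p a i m ≤ g
      · have hrepum : rep p (u p a i m) = u p a i m := by rw [rep]; exact if_pos hcase
        have hv : (a * rep p (u p a i m)) % p ^ 2 = u p a i (m + 1) := by
          rw [hrepum, husucc]
        by_cases hcase' : u p a i (m + 1) ≤ g
        · -- no flip
          have hrepum' : rep p (u p a i (m + 1)) = u p a i (m + 1) := by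
            rw [rep]; exact if_pos hcase'
          have hk : kcnt p a i (m + 1) = kcnt p a i m := by
            rw [kcnt, if_pos (iff_of_true hcase' hcase), add_zero]
          simp only [gammaMatrix, Matrix.of_apply, hval, hj0, hv, hrepum', hk]
          have hne2 : ¬ ((r.1 : ℕ) + 1 = p ^ 2 - u p a i (m + 1)) := by omega
          by_cases hr1 : ((r.1 : ℕ) + 1) = u p a i (m + 1)
          · simp only [if_pos hr1]
            change ∑ x, (J ^ kcnt p a i m) q.2 x * (1 : Matrix (Fin 2) (Fin 2) ℝ) x r.2 = _
            rw [← Matrix.mul_apply, mul_one]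
          · simp only [if_neg hr1, if_neg hne2]
            simp
        · -- flip
          have hrepum' : rep p (u p a i (m + 1)) = p ^ 2 - u p a i (m + 1) := by
            rw [rep]; exact if_neg hcase'
          have hk : kcnt p a i (m + 1) = kcnt p a i m + 1 := by
            rw [kcnt, if_neg (by intro h; exact hcase' (h.mpr hcase))]
          simp only [gammaMatrix, Matrix.of_apply, hval, hj0, hv, hrepum', hk]
          have hne1 : ¬ ((r.1 : ℕ) + 1 = u p a i (m + 1)) := by omega
          simp only [if_neg hne1]
          by_cases hr1 : ((r.1 : ℕ) + 1) = p ^ 2 - u p a i (m + 1)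
          · simp only [if_pos hr1]
            change ∑ x, (J ^ kcnt p a i m) q.2 x *
              (!![0, 1; -1, 0] : Matrix (Fin 2) (Fin 2) ℝ) x r.2 = _
            rw [show J ^ (kcnt p a i m + 1) = J ^ kcnt p a i m * J from pow_succ _ _,
              ← Matrix.mul_apply]
            rfl
          · simp only [if_neg hr1]
            simp
      · have hrepum : rep p (u p a i m) = p ^ 2 - u p a i m := by
          rw [rep]; exact if_neg hcase
        have hv : (a * rep p (u p a i m)) % p ^ 2 = p ^ 2 - u p a i (m + 1) := by
          rw [hrepum]
          exact mod_mul_sub (by omega) (by omega) hum'.1 hum'.2 husucc.symm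
        have hsub : p ^ 2 - (p ^ 2 - u p a i (m + 1)) = u p a i (m + 1) := by omega
        by_cases hcase' : u p a i (m + 1) ≤ g
        · -- flip
          have hrepum' : rep p (u p a i (m + 1)) = u p a i (m + 1) := by
            rw [rep]; exact if_pos hcase'
          have hk : kcnt p a i (m + 1) = kcnt p a i m + 1 := by
            rw [kcnt, if_neg (by intro h; exact hcase (h.mp hcase'))]
          simp only [gammaMatrix, Matrix.of_apply, hval, hj0, hv, hrepum', hk, hsub]
          have hne1 : ¬ ((r.1 : ℕ) + 1 = p ^ 2 - u p a i (m + 1)) := by omega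
          simp only [if_neg hne1]
          by_cases hr1 : ((r.1 : ℕ) + 1) = u p a i (m + 1)
          · simp only [if_pos hr1]
            change ∑ x, (J ^ kcnt p a i m) q.2 x *
              (!![0, 1; -1, 0] : Matrix (Fin 2) (Fin 2) ℝ) x r.2 = _
            rw [show J ^ (kcnt p a i m + 1) = J ^ kcnt p a i m * J from pow_succ _ _,
              ← Matrix.mul_apply]
            rfl
          · simp only [if_neg hr1]
            simp
        · -- no flip
          have hrepum' : rep p (u p a i (m + 1)) = p ^ 2 - u p a i (m + 1) := by
            rw [rep]; exact if_neg hcase'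
          have hk : kcnt p a i (m + 1) = kcnt p a i m := by
            rw [kcnt, if_pos (iff_of_false hcase' hcase), add_zero]
          simp only [gammaMatrix, Matrix.of_apply, hval, hj0, hv, hrepum', hk, hsub]
          by_cases hr1 : ((r.1 : ℕ) + 1) = p ^ 2 - u p a i (m + 1)
          · simp only [if_pos hr1]
            change ∑ x, (J ^ kcnt p a i m) q.2 x * (1 : Matrix (Fin 2) (Fin 2) ℝ) x r.2 = _
            rw [← Matrix.mul_apply, mul_one]
          · have hne2 : ¬ ((r.1 : ℕ) + 1 = u p a i (m + 1)) := by omega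
            simp only [if_neg hr1, if_neg hne2]
            simp

lemma kcnt_even {p a : ℕ} (hp : p.Prime) (hodd : Odd p) {i : ℕ} (hi : 0 < i)
    (hig : i ≤ (p ^ 2 - 1) / 2) (m : ℕ) :
    (Even (kcnt p a i m) ↔ u p a i m ≤ (p ^ 2 - 1) / 2) := by
  have hgg := hg hp hodd
  induction m with
  | zero =>
    have hu0 : u p a i 0 = i := by
      rw [u, pow_zero, one_mul, Nat.mod_eq_of_lt (by omega)]
    simp [kcnt, hu0, hig]
  | succ m ih =>
    rw [kcnt]
    by_cases h : u p a i (m + 1) ≤ (p ^ 2 - 1) / 2 ↔ u p a i m ≤ (p ^ 2 - 1) / 2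
    · rw [if_pos h, add_zero]
      exact ih.trans h.symm
    · rw [if_neg h, Nat.even_add_one]
      tauto

end Stmt12Aux

open Stmt12Aux in
/-- if a generates (ℤ/p²ℤ)^×, then γ^{φ(p²)} = γ^{p(p-1)} is a
diagonal matrix whose 2×2 diagonal blocks are each ±I. -/
theorem stmt12 (p a : ℕ) (hp : p.Prime) (hodd : Odd p)
    (ha : Nat.Coprime a (p ^ 2))
    (hgen : ∀ x : (ZMod (p ^ 2))ˣ, x ∈ Subgroup.zpowers (ZMod.unitOfCoprime a ha)) :
    ∃ ε : Fin ((p ^ 2 - 1) / 2) → ℝ, (∀ i, ε i = 1 ∨ ε i = -1) ∧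
      (gammaMatrix p a) ^ (p * (p - 1)) =
        Matrix.of fun q r => if q.1 = r.1 ∧ q.2 = r.2 then ε q.1 else 0 := by
  have hgg := hg hp hodd
  set g := (p ^ 2 - 1) / 2 with hgdef
  set n := p * (p - 1) with hndef
  have htot : Nat.totient (p ^ 2) = n := by
    rw [Nat.totient_prime_pow hp (by norm_num)]
    rw [hndef, pow_one]
  have han : a ^ n % p ^ 2 = 1 := by
    have hmod := Nat.ModEq.pow_totient ha
    rw [htot] at hmod
    have h1 : 1 % p ^ 2 = 1 := Nat.mod_eq_of_lt (by omega)
    unfold Nat.ModEq at hmod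
    omega
  have hun : ∀ q : Fin g, u p a ((q : ℕ) + 1) n = (q : ℕ) + 1 := by
    intro q
    have hq : (q : ℕ) < g := q.isLt
    have hlt : ((q : ℕ) + 1) % p ^ 2 = (q : ℕ) + 1 := Nat.mod_eq_of_lt (by omega)
    rw [u, Nat.mul_mod, han, one_mul, hlt, hlt]
  refine ⟨fun q => (-1 : ℝ) ^ (kcnt p a ((q : ℕ) + 1) n / 2), ?_, ?_⟩
  · intro q
    rcases Nat.even_or_odd (kcnt p a ((q : ℕ) + 1) n / 2) with h | h
    · left; exact h.neg_one_pow
    · right; exact h.neg_one_pow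
  · rw [pow_eq hp hodd ha n]
    ext q r
    have hq : (q.1 : ℕ) < g := q.1.isLt
    have heven : Even (kcnt p a ((q.1 : ℕ) + 1) n) := by
      rw [kcnt_even (a := a) hp hodd (by omega) (by omega), hun q.1]
      omega
    obtain ⟨t, ht⟩ := heven
    have hk2 : kcnt p a ((q.1 : ℕ) + 1) n = 2 * t := by omega
    have hdiv : kcnt p a ((q.1 : ℕ) + 1) n / 2 = t := by omega
    have hrep : rep p (u p a ((q.1 : ℕ) + 1) n) = (q.1 : ℕ) + 1 := by
      rw [hun q.1, rep]
      split <;> omega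
    simp only [Matrix.of_apply, hrep, hk2, hdiv, J_pow_even, Matrix.smul_apply,
      Matrix.one_apply, smul_eq_mul]
    by_cases h1 : q.1 = r.1
    · have h1' : (r.1 : ℕ) + 1 = (q.1 : ℕ) + 1 := by rw [h1]
      simp only [if_pos h1', h1, true_and]
      by_cases h2 : q.2 = r.2
      · simp [h2]
      · simp [h2]
    · have h1' : ¬ ((r.1 : ℕ) + 1 = (q.1 : ℕ) + 1) := by
        intro h; exact h1 (Fin.ext (by omega))
      simp [h1', h1]
      exact fun h => absurd (Fin.ext h).symm h1
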